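/- Let n ≥ 1, let a < b be real numbers, let C be an n×n real symmetric matrix, let D : ℝ → Matrix n n ℝ be continuous on [a,b] with each D(s) symmetric, and let H₀ be an n×n complex symmetric matrix. Suppose Y, Z : ℝ → Matrix n n ℂ satisfy Y(a) = I, Z(a) = H₀, and for every s ∈ [a,b], Y has derivative C·Z(s) at s and Z has derivative −D(s)·Y(s) at s (with C and D(s) viewed as complex matrices), and suppose det Y(s) ≠ 0 for every s ∈ [a,b]. Set H(s) := Z(s)·Y(s)⁻¹. Then for every s ∈ [a,b], det(Im H(s)) · |det Y(s)|² = det(Im H₀). -/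

import Mathlib

open Matrix Set

attribute [local instance] Matrix.normedAddCommGroup Matrix.normedSpace

private lemma hasDerivAt_entry {n : ℕ} {f : ℝ → Matrix (Fin n) (Fin n) ℂ}
    {f' : Matrix (Fin n) (Fin n) ℂ} {s : ℝ} (h : HasDerivAt f f' s) (i j : Fin n) :
    HasDerivAt (fun t => f t i j) (f' i j) s :=
  hasDerivAt_pi.mp (hasDerivAt_pi.mp h i) j

private lemma hasDerivAt_of_entries {n : ℕ} {f : ℝ → Matrix (Fin n) (Fin n) ℂ}
    {f' : Matrix (Fin n) (Fin n) ℂ} {s : ℝ}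
    (h : ∀ i j, HasDerivAt (fun t => f t i j) (f' i j) s) :
    HasDerivAt f f' s :=
  hasDerivAt_pi.mpr fun i => hasDerivAt_pi.mpr fun j => h i j

private lemma HasDerivAt.matMul {n : ℕ} {f g : ℝ → Matrix (Fin n) (Fin n) ℂ}
    {f' g' : Matrix (Fin n) (Fin n) ℂ} {s : ℝ}
    (hf : HasDerivAt f f' s) (hg : HasDerivAt g g' s) :
    HasDerivAt (fun t => f t * g t) (f' * g s + f s * g') s := by
  apply hasDerivAt_of_entries
  intro i j
  simp only [Matrix.mul_apply, Matrix.add_apply]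
  rw [← Finset.sum_add_distrib]
  exact HasDerivAt.fun_sum fun k _ => (hasDerivAt_entry hf i k).mul (hasDerivAt_entry hg k j)

private lemma HasDerivAt.matConjTranspose {n : ℕ} {f : ℝ → Matrix (Fin n) (Fin n) ℂ}
    {f' : Matrix (Fin n) (Fin n) ℂ} {s : ℝ} (hf : HasDerivAt f f' s) :
    HasDerivAt (fun t => (f t)ᴴ) f'ᴴ s := by
  apply hasDerivAt_of_entries
  intro i j
  simp only [Matrix.conjTranspose_apply]
  exact (Complex.conjCLE.toContinuousLinearMap.hasFDerivAt.comp_hasDerivAt s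
    (hasDerivAt_entry hf j i))

private lemma HasDerivAt.matTranspose {n : ℕ} {f : ℝ → Matrix (Fin n) (Fin n) ℂ}
    {f' : Matrix (Fin n) (Fin n) ℂ} {s : ℝ} (hf : HasDerivAt f f' s) :
    HasDerivAt (fun t => (f t)ᵀ) f'ᵀ s :=
  hasDerivAt_of_entries fun i j => hasDerivAt_entry hf j i

private lemma const_of_derivAt_zero {E : Type*} [NormedAddCommGroup E] [NormedSpace ℝ E]
    {f : ℝ → E} {a b : ℝ} (h : ∀ s ∈ Set.Icc a b, HasDerivAt f 0 s) :
    ∀ s ∈ Set.Icc a b, f s = f a :=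
  constant_of_has_deriv_right_zero
    (fun s hs => (h s hs).continuousAt.continuousWithinAt)
    (fun s hs => (h s ⟨hs.1, hs.2.le⟩).hasDerivWithinAt)

/-- Lemma 3.3: the determinant identity
`det(Im H(s)) ⋅ |det Y(s)|² = det(Im H₀)` for `H = Z Y⁻¹`, where `Y, Z` solve
the linear system `Y' = C Z`, `Z' = -D Y` with `Y(a) = I`, `Z(a) = H₀`. -/
theorem det_im_riccati_identity
    (n : ℕ) (hn : 1 ≤ n) (a b : ℝ) (hab : a < b)
    (C : Matrix (Fin n) (Fin n) ℝ) (hC : Cᵀ = C)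
    (D : ℝ → Matrix (Fin n) (Fin n) ℝ)
    (hD : ContinuousOn D (Set.Icc a b))
    (hDsymm : ∀ s ∈ Set.Icc a b, (D s)ᵀ = D s)
    (H₀ : Matrix (Fin n) (Fin n) ℂ) (hH₀ : H₀ᵀ = H₀)
    (Y Z : ℝ → Matrix (Fin n) (Fin n) ℂ)
    (hYa : Y a = 1) (hZa : Z a = H₀)
    (hY : ∀ s ∈ Set.Icc a b, HasDerivAt Y (C.map ((↑) : ℝ → ℂ) * Z s) s)
    (hZ : ∀ s ∈ Set.Icc a b, HasDerivAt Z (-((D s).map ((↑) : ℝ → ℂ) * Y s)) s)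
    (hdet : ∀ s ∈ Set.Icc a b, (Y s).det ≠ 0) :
    ∀ s ∈ Set.Icc a b,
      (Matrix.of fun i j => ((Z s * (Y s)⁻¹) i j).im).det
          * ‖(Y s).det‖ ^ 2
        = (Matrix.of fun i j => (H₀ i j).im).det := by
  have hCH : (C.map ((↑) : ℝ → ℂ))ᴴ = C.map ((↑) : ℝ → ℂ) := by
    ext i j
    have := congrFun (congrFun hC i) j
    simp only [Matrix.transpose_apply] at this
    simp [Matrix.conjTranspose_apply, Matrix.map_apply, this]
  have hCT : (C.map ((↑) : ℝ → ℂ))ᵀ = C.map ((↑) : ℝ → ℂ) := by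
    ext i j
    have := congrFun (congrFun hC i) j
    simp only [Matrix.transpose_apply] at this
    simp [Matrix.map_apply, this]
  -- the conjugate-transpose invariant
  have hg : ∀ s ∈ Set.Icc a b,
      (Y s)ᴴ * Z s - (Z s)ᴴ * Y s = H₀ - H₀ᴴ := by
    have hder : ∀ s ∈ Set.Icc a b,
        HasDerivAt (fun t => (Y t)ᴴ * Z t - (Z t)ᴴ * Y t) 0 s := by
      intro s hs
      have hDH : ((D s).map ((↑) : ℝ → ℂ))ᴴ = (D s).map ((↑) : ℝ → ℂ) := by
        ext i j
        have := congrFun (congrFun (hDsymm s hs) i) j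
        simp only [Matrix.transpose_apply] at this
        simp [Matrix.conjTranspose_apply, Matrix.map_apply, this]
      have h1 := ((hY s hs).matConjTranspose).matMul (hZ s hs)
      have h2 := ((hZ s hs).matConjTranspose).matMul (hY s hs)
      have h3 := h1.fun_sub h2
      refine h3.congr_deriv ?_
      simp only [Matrix.conjTranspose_neg, Matrix.conjTranspose_mul, hCH, hDH,
        Matrix.neg_mul, Matrix.mul_neg, Matrix.mul_assoc]
      abel
    intro s hs
    have := const_of_derivAt_zero hder s hs
    rwa [hYa, hZa, Matrix.conjTranspose_one, Matrix.one_mul, Matrix.mul_one] at this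
  -- the transpose invariant
  have ht : ∀ s ∈ Set.Icc a b, (Y s)ᵀ * Z s = (Z s)ᵀ * Y s := by
    have hder : ∀ s ∈ Set.Icc a b,
        HasDerivAt (fun t => (Y t)ᵀ * Z t - (Z t)ᵀ * Y t) 0 s := by
      intro s hs
      have hDT : ((D s).map ((↑) : ℝ → ℂ))ᵀ = (D s).map ((↑) : ℝ → ℂ) := by
        ext i j
        have := congrFun (congrFun (hDsymm s hs) i) j
        simp only [Matrix.transpose_apply] at this
        simp [Matrix.map_apply, this]
      have h1 := ((hY s hs).matTranspose).matMul (hZ s hs)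
      have h2 := ((hZ s hs).matTranspose).matMul (hY s hs)
      have h3 := h1.fun_sub h2
      refine h3.congr_deriv ?_
      simp only [Matrix.transpose_neg, Matrix.transpose_mul, hCT, hDT,
        Matrix.neg_mul, Matrix.mul_neg, Matrix.mul_assoc]
      abel
    intro s hs
    have := const_of_derivAt_zero hder s hs
    rw [hYa, hZa, Matrix.transpose_one, Matrix.one_mul, Matrix.mul_one, hH₀, sub_self] at this
    exact sub_eq_zero.mp this
  -- main argument at a fixed s
  intro s hs
  have hds : (Y s).det ≠ 0 := hdet s hs
  have hu : IsUnit (Y s).det := isUnit_iff_ne_zero.mpr hds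
  have hYi : (Y s)⁻¹ * Y s = 1 := Matrix.nonsing_inv_mul _ hu
  have hYi' : Y s * (Y s)⁻¹ = 1 := Matrix.mul_nonsing_inv _ hu
  set H : Matrix (Fin n) (Fin n) ℂ := Z s * (Y s)⁻¹ with hHdef
  have hZs : Z s = H * Y s := by
    rw [hHdef, Matrix.mul_assoc, hYi, Matrix.mul_one]
  -- H is symmetric
  have hsymm : Hᵀ = H := by
    have hz : (Z s)ᵀ = (Y s)ᵀ * H := by
      have h2 := congrArg (fun M => M * (Y s)⁻¹) (ht s hs).symm
      simpa only [Matrix.mul_assoc, hYi', Matrix.mul_one, ← hHdef] using h2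
    have hdt : ((Y s)ᵀ).det ≠ 0 := by rwa [Matrix.det_transpose]
    have hti : ((Y s)ᵀ)⁻¹ * (Y s)ᵀ = 1 :=
      Matrix.nonsing_inv_mul _ (isUnit_iff_ne_zero.mpr hdt)
    rw [hHdef, Matrix.transpose_mul, Matrix.transpose_nonsing_inv, hz, ← hHdef,
      ← Matrix.mul_assoc, hti, Matrix.one_mul]
  -- key identity
  have key : (Y s)ᴴ * (H - Hᴴ) * Y s = H₀ - H₀ᴴ := by
    have hzH : (Z s)ᴴ = (Y s)ᴴ * Hᴴ := by
      rw [hZs, Matrix.conjTranspose_mul]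
    calc (Y s)ᴴ * (H - Hᴴ) * Y s
        = (Y s)ᴴ * (H * Y s) - ((Y s)ᴴ * Hᴴ) * Y s := by
          rw [Matrix.mul_sub, Matrix.sub_mul, Matrix.mul_assoc]
      _ = (Y s)ᴴ * Z s - (Z s)ᴴ * Y s := by rw [← hZs, ← hzH]
      _ = H₀ - H₀ᴴ := hg s hs
  -- entrywise imaginary-part identities
  set A : Matrix (Fin n) (Fin n) ℝ := Matrix.of fun i j => (H i j).im with hA
  set B : Matrix (Fin n) (Fin n) ℝ := Matrix.of fun i j => (H₀ i j).im with hB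
  have hHsub : H - Hᴴ = (2 * Complex.I) • (A.map (Complex.ofRealHom)) := by
    ext i j
    have hji : H j i = H i j := congrFun (congrFun hsymm i) j
    simp only [Matrix.sub_apply, Matrix.conjTranspose_apply, Matrix.smul_apply,
      Matrix.map_apply, hA, Matrix.of_apply, hji, smul_eq_mul,
      Complex.ofRealHom_eq_coe]
    rw [show star (H i j) = (starRingEnd ℂ) (H i j) from rfl, Complex.sub_conj]
    push_cast
    ring
  have hH0sub : H₀ - H₀ᴴ = (2 * Complex.I) • (B.map (Complex.ofRealHom)) := by
    ext i j
    have hji : H₀ j i = H₀ i j := congrFun (congrFun hH₀ i) j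
    simp only [Matrix.sub_apply, Matrix.conjTranspose_apply, Matrix.smul_apply,
      Matrix.map_apply, hB, Matrix.of_apply, hji, smul_eq_mul,
      Complex.ofRealHom_eq_coe]
    rw [show star (H₀ i j) = (starRingEnd ℂ) (H₀ i j) from rfl, Complex.sub_conj]
    push_cast
    ring
  -- take determinants
  have hdk := congrArg Matrix.det key
  rw [Matrix.det_mul, Matrix.det_mul, hHsub, hH0sub, Matrix.det_smul, Matrix.det_smul,
    ← RingHom.mapMatrix_apply, ← RingHom.mapMatrix_apply, ← RingHom.map_det,
    ← RingHom.map_det, Matrix.det_conjTranspose, Fintype.card_fin] at hdk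
  simp only [Complex.ofRealHom_eq_coe] at hdk
  have h2I : (2 * Complex.I) ^ n ≠ 0 := pow_ne_zero _ (by simp [Complex.I_ne_zero])
  have hdk2 : ((A.det : ℂ) * ((‖(Y s).det‖ : ℝ) ^ 2 : ℝ)) = (B.det : ℂ) := by
    have hstar : star (Y s).det * (Y s).det
        = ((‖(Y s).det‖ ^ 2 : ℝ) : ℂ) := by
      have h1 := Complex.mul_conj ((Y s).det)
      rw [Complex.sq_norm, mul_comm]
      exact h1
    apply mul_left_cancel₀ h2I
    calc (2 * Complex.I) ^ n * ((A.det : ℂ) * ((‖(Y s).det‖ ^ 2 : ℝ) : ℂ))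
        = star (Y s).det * ((2 * Complex.I) ^ n * ((A.det : ℝ) : ℂ))
            * (Y s).det := by
          rw [← hstar]; ring
      _ = (2 * Complex.I) ^ n * ((B.det : ℝ) : ℂ) := hdk
  have := hdk2
  rw [← Complex.ofReal_mul] at this
  exact_mod_cast this
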